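/- A 12-vertex 6-dimensional weak pseudomanifold with complementarity is strongly connected (i.e., is a pseudomanifold): any two facets intersect in at least 3 vertices, and (assuming links of 3-element faces are strongly connected) the facet adjacency graph is connected. -/

import Mathlib

open Finset

/-- `K` is an (abstract) simplicial complex: faces are nonempty finite sets,
closed under passing to nonempty subsets. -/
def IsComplex {V : Type} [DecidableEq V] (K : Finset (Finset V)) : Prop :=
  (∀ σ ∈ K, σ.Nonempty) ∧ ∀ σ ∈ K, ∀ τ ⊆ σ, τ.Nonempty → τ ∈ K

/-- `K` is pure of dimension `d`: every face has at most `d+1` vertices and is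
contained in a face with exactly `d+1` vertices (a facet). -/
def IsPure {V : Type} [DecidableEq V] (d : ℕ) (K : Finset (Finset V)) : Prop :=
  (∀ σ ∈ K, σ.card ≤ d + 1) ∧ ∀ σ ∈ K, ∃ γ ∈ K, σ ⊆ γ ∧ γ.card = d + 1

/-- `K` is a `d`-dimensional weak pseudomanifold: a pure `d`-dimensional simplicial
complex (with at least one facet) in which every `(d-1)`-face (i.e. `d`-element face)
is contained in exactly two facets. -/
def IsWPM {V : Type} [DecidableEq V] (d : ℕ) (K : Finset (Finset V)) : Prop :=
  IsComplex K ∧ IsPure d K ∧ (∃ σ ∈ K, σ.card = d + 1) ∧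
    ∀ σ ∈ K, σ.card = d → (K.filter fun γ => γ.card = d + 1 ∧ σ ⊆ γ).card = 2

/-- Complementarity: exactly one of each complementary pair of nonempty subsets
of the vertex set is a face. -/
def Complementarity {V : Type} [DecidableEq V] [Fintype V] (K : Finset (Finset V)) : Prop :=
  ∀ A : Finset V, A.Nonempty → Aᶜ.Nonempty → (A ∈ K ↔ Aᶜ ∉ K)

/-- The link of `σ` in `K`: all faces `τ` disjoint from `σ` with `σ ∪ τ` a face. -/
def lk {V : Type} [DecidableEq V] (K : Finset (Finset V)) (σ : Finset V) :
    Finset (Finset V) :=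
  K.filter fun τ => σ ∩ τ = ∅ ∧ σ ∪ τ ∈ K

/-- The vertex set of a simplicial complex. -/
def vertSet {V : Type} [DecidableEq V] [Fintype V] (K : Finset (Finset V)) : Finset V :=
  Finset.univ.filter fun v => ({v} : Finset V) ∈ K

/-- `K` is strongly connected in dimension `d`: any two facets (faces with `d+1`
vertices) are joined by a path of facets in which consecutive facets share a
`(d-1)`-face (i.e. meet in `d` vertices). -/
def StronglyConnected {V : Type} [DecidableEq V] (d : ℕ) (K : Finset (Finset V)) : Prop :=
  ∀ α ∈ K, α.card = d + 1 → ∀ β ∈ K, β.card = d + 1 →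
    Relation.ReflTransGen
      (fun a b : Finset V => a ∈ K ∧ b ∈ K ∧ a.card = d + 1 ∧ b.card = d + 1 ∧
        (a ∩ b).card = d) α β

/-- Lemma 4.9: a 12-vertex 6-dimensional weak pseudomanifold with
complementarity is a pseudomanifold: any two facets meet in at least 3 vertices,
and (given that links of 3-element faces are strongly connected) the facet
adjacency graph is connected. -/
theorem stmt_14 (M : Finset (Finset (Fin 12))) (hM : IsWPM 6 M)
    (hvert : ∀ v : Fin 12, ({v} : Finset (Fin 12)) ∈ M)
    (hcomp : Complementarity M)
    (hlink : ∀ δ ∈ M, δ.card = 3 → StronglyConnected 3 (lk M δ)) :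
    (∀ α ∈ M, α.card = 7 → ∀ β ∈ M, β.card = 7 → 3 ≤ (α ∩ β).card) ∧
    StronglyConnected 6 M := by
  obtain ⟨⟨hne, hclosed⟩, hpure, hfac, hwpm⟩ := hM
  have key : ∀ α ∈ M, α.card = 7 → ∀ β ∈ M, β.card = 7 → 3 ≤ (α ∩ β).card := by
    intro α hα hα7 β hβ hβ7
    by_contra h
    push_neg at h
    have hcu := Finset.card_union_add_card_inter α β
    have hle : (α ∪ β).card ≤ 12 := by
      have := Finset.card_le_univ (α ∪ β)
      simpa using this
    have hcov : α ∪ β = Finset.univ := by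
      apply Finset.eq_univ_of_card
      simp only [Fintype.card_fin]
      omega
    have hsub : αᶜ ⊆ β := by
      intro v hv
      rw [Finset.mem_compl] at hv
      have hv' : v ∈ α ∪ β := hcov ▸ Finset.mem_univ v
      rw [Finset.mem_union] at hv'
      tauto
    have hccard : (αᶜ : Finset (Fin 12)).card = 5 := by
      rw [Finset.card_compl, hα7]; simp
    have hαc : αᶜ ∈ M := hclosed β hβ αᶜ hsub (by rw [← Finset.card_pos, hccard]; omega)
    exact ((hcomp α (by rw [← Finset.card_pos]; omega)
      (by rw [← Finset.card_pos, hccard]; omega)).mp hα) hαc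
  refine ⟨key, ?_⟩
  intro α hα hα7 β hβ hβ7
  have h3 := key α hα hα7 β hβ hβ7
  obtain ⟨δ, hδsub, hδ3⟩ := Finset.exists_subset_card_eq h3
  have hδα : δ ⊆ α := hδsub.trans Finset.inter_subset_left
  have hδβ : δ ⊆ β := hδsub.trans Finset.inter_subset_right
  have hδne : δ.Nonempty := by rw [← Finset.card_pos, hδ3]; omega
  have hδM : δ ∈ M := hclosed α hα δ hδα hδne
  have hmemlk : ∀ γ ∈ M, γ.card = 7 → δ ⊆ γ → γ \ δ ∈ lk M δ ∧ (γ \ δ).card = 4 := by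
    intro γ hγ hγ7 hδγ
    have hcd : (γ \ δ).card = 4 := by rw [Finset.card_sdiff_of_subset hδγ, hγ7, hδ3]
    refine ⟨?_, hcd⟩
    simp only [lk, Finset.mem_filter]
    refine ⟨hclosed γ hγ _ (Finset.sdiff_subset) (by rw [← Finset.card_pos, hcd]; omega),
      ?_, ?_⟩
    · rw [← Finset.disjoint_iff_inter_eq_empty]
      exact Finset.disjoint_sdiff
    · rw [Finset.union_sdiff_of_subset hδγ]; exact hγ
  obtain ⟨hαlk, hαc4⟩ := hmemlk α hα hα7 hδα
  obtain ⟨hβlk, hβc4⟩ := hmemlk β hβ hβ7 hδβ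
  have hpath := hlink δ hδM hδ3 (α \ δ) hαlk hαc4 (β \ δ) hβlk hβc4
  have hlift : ∀ a b : Finset (Fin 12),
      (a ∈ lk M δ ∧ b ∈ lk M δ ∧ a.card = 3 + 1 ∧ b.card = 3 + 1 ∧ (a ∩ b).card = 3) →
      ((δ ∪ a) ∈ M ∧ (δ ∪ b) ∈ M ∧ (δ ∪ a).card = 6 + 1 ∧ (δ ∪ b).card = 6 + 1 ∧
        ((δ ∪ a) ∩ (δ ∪ b)).card = 6) := by
    intro a b ⟨halk, hblk, ha4, hb4, hab3⟩
    simp only [lk, Finset.mem_filter] at halk hblk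
    obtain ⟨-, hda, haM⟩ := halk
    obtain ⟨-, hdb, hbM⟩ := hblk
    have hdja : Disjoint δ a := Finset.disjoint_iff_inter_eq_empty.mpr hda
    have hdjb : Disjoint δ b := Finset.disjoint_iff_inter_eq_empty.mpr hdb
    refine ⟨haM, hbM, ?_, ?_, ?_⟩
    · rw [Finset.card_union_of_disjoint hdja, hδ3, ha4]
    · rw [Finset.card_union_of_disjoint hdjb, hδ3, hb4]
    · rw [← Finset.union_inter_distrib_left,
        Finset.card_union_of_disjoint (hdja.mono_right Finset.inter_subset_left),
        hδ3, hab3]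
  have hfin : Relation.ReflTransGen
      (fun a b : Finset (Fin 12) => a ∈ M ∧ b ∈ M ∧ a.card = 6 + 1 ∧ b.card = 6 + 1 ∧
        (a ∩ b).card = 6) (δ ∪ (α \ δ)) (δ ∪ (β \ δ)) :=
    Relation.ReflTransGen.lift (fun τ => δ ∪ τ) hlift _ _ hpath
  simp only [Finset.union_sdiff_of_subset hδα, Finset.union_sdiff_of_subset hδβ] at hfin
  exact hfin
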